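/- Every solution of the mixed formulation solves the variational inequality (L² multiplier version of part 2 of the paper's equivalence theorem): in the mixed/variational-inequality setting below, with (Ω, m) σ-finite, suppose (u, λ) ∈ V × M_pt satisfies a(u, v) + ∫_Ω ⟨λ, τv⟩ dm = L(v) for all v ∈ V, and ∫_Ω ⟨μ − λ, τu⟩ dm ≤ ∫_Ω g (μ_n − λ_n) dm for all μ ∈ M_pt. Then u ∈ K and a(u, v − u) + j(v) − j(u) ≥ L(v − u) for all v ∈ K. -/

import Mathlib

open MeasureTheory

private lemma memLp_prod_mk {Ω : Type*} [MeasurableSpace Ω] {m : Measure Ω}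
    {f g : Ω → ℝ} (hf : MemLp f 2 m) (hg : MemLp g 2 m) :
    MemLp (fun ω => (f ω, g ω)) 2 m := by
  have h := ((ContinuousLinearMap.inl ℝ ℝ ℝ).comp_memLp' hf).add
    ((ContinuousLinearMap.inr ℝ ℝ ℝ).comp_memLp' hg)
  have he : (⇑(ContinuousLinearMap.inl ℝ ℝ ℝ) ∘ f + ⇑(ContinuousLinearMap.inr ℝ ℝ ℝ) ∘ g)
      = fun ω => (f ω, g ω) := by
    funext ω; simp [Prod.ext_iff]
  rwa [he] at h

private lemma integrable_mul_L2 {Ω : Type*} [MeasurableSpace Ω] {m : Measure Ω}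
    {f g : Ω → ℝ} (hf : MemLp f 2 m) (hg : MemLp g 2 m) :
    Integrable (fun ω => f ω * g ω) m := by
  have h : MemLp (f • g) 1 m := hg.smul hf (hpqr := ⟨by simp [ENNReal.inv_two_add_inv_two]⟩)
  rw [memLp_one_iff_integrable] at h
  exact h

private lemma max_mul_self (x : ℝ) : max x 0 * x = (max x 0) ^ 2 := by
  rcases le_or_gt x 0 with h | h
  · rw [max_eq_right h]; ring
  · rw [max_eq_left h.le]; ring

/-- Every solution of the mixed formulation solves the variational inequality: if
`(u, λ) ∈ V × M_pt` satisfies the mixed variational equation and the multiplier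
constraint, then `u` belongs to the admissible set `K = {v : (τv)ₙ ≤ g a.e.}` and
satisfies `a(u, v − u) + j(v) − j(u) ≥ L(v − u)` for all `v ∈ K`, where
`j(v) = ∫ F |(τv)ₜ| dm`. -/
theorem mixed_solves_variational_inequality
    {Ω : Type*} [MeasurableSpace Ω] (m : Measure Ω) [SigmaFinite m]
    {V : Type*} [NormedAddCommGroup V] [InnerProductSpace ℝ V]
    (τ : V →ₗ[ℝ] Ω → ℝ × ℝ) (hτ : ∀ v : V, MemLp (τ v) 2 m)
    (a : V →ₗ[ℝ] V →ₗ[ℝ] ℝ) (L : V →ₗ[ℝ] ℝ)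
    (g F : Ω → ℝ) (hg : MemLp g 2 m) (hF : MemLp F 2 m)
    (hFpos : ∀ᵐ ω ∂m, 0 < F ω)
    (u : V) (l : Ω → ℝ × ℝ)
    (hl : MemLp l 2 m) (hln : ∀ᵐ ω ∂m, 0 ≤ (l ω).1)
    (hlt : ∀ᵐ ω ∂m, |(l ω).2| ≤ F ω)
    (heq : ∀ v : V,
      a u v + (∫ ω, ((l ω).1 * (τ v ω).1 + (l ω).2 * (τ v ω).2) ∂m) = L v)
    (hineq : ∀ μ : Ω → ℝ × ℝ, MemLp μ 2 m →
      (∀ᵐ ω ∂m, 0 ≤ (μ ω).1) → (∀ᵐ ω ∂m, |(μ ω).2| ≤ F ω) →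
      ∫ ω, (((μ ω).1 - (l ω).1) * (τ u ω).1 + ((μ ω).2 - (l ω).2) * (τ u ω).2) ∂m
        ≤ ∫ ω, g ω * ((μ ω).1 - (l ω).1) ∂m) :
    (∀ᵐ ω ∂m, (τ u ω).1 ≤ g ω) ∧
    (∀ v : V, (∀ᵐ ω ∂m, (τ v ω).1 ≤ g ω) →
      a u (v - u) + (∫ ω, F ω * |(τ v ω).2| ∂m) - (∫ ω, F ω * |(τ u ω).2| ∂m)
        ≥ L (v - u)) := by
  classical
  -- component membership
  have hτ1 : ∀ v : V, MemLp (fun ω => (τ v ω).1) 2 m := fun v =>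
    (ContinuousLinearMap.fst ℝ ℝ ℝ).comp_memLp' (hτ v)
  have hτ2 : ∀ v : V, MemLp (fun ω => (τ v ω).2) 2 m := fun v =>
    (ContinuousLinearMap.snd ℝ ℝ ℝ).comp_memLp' (hτ v)
  have hl1 : MemLp (fun ω => (l ω).1) 2 m :=
    (ContinuousLinearMap.fst ℝ ℝ ℝ).comp_memLp' hl
  have hl2 : MemLp (fun ω => (l ω).2) 2 m :=
    (ContinuousLinearMap.snd ℝ ℝ ℝ).comp_memLp' hl
  have habs : ∀ v : V, MemLp (fun ω => |(τ v ω).2|) 2 m := fun v => (hτ2 v).abs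
  -- Step 1 : u ∈ K
  set φ : Ω → ℝ := fun ω => max ((τ u ω).1 - g ω) 0 with hφdef
  have hφmem : MemLp φ 2 m := ((hτ1 u).sub hg).pos_part
  have hφnn : ∀ ω, 0 ≤ φ ω := fun ω => le_max_right _ _
  have hK : ∀ᵐ ω ∂m, (τ u ω).1 ≤ g ω := by
    have h1 := hineq (fun ω => ((l ω).1 + φ ω, (l ω).2))
      (memLp_prod_mk (hl1.add hφmem) hl2)
      (by filter_upwards [hln] with ω h using add_nonneg h (hφnn ω)) hlt
    simp only [add_sub_cancel_left, sub_self, zero_mul, add_zero] at h1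
    have h2 : ∫ ω, (φ ω) ^ 2 ∂m ≤ 0 := by
      have hi1 : Integrable (fun ω => φ ω * (τ u ω).1) m := integrable_mul_L2 hφmem (hτ1 u)
      have hi2 : Integrable (fun ω => g ω * φ ω) m := integrable_mul_L2 hg hφmem
      have : ∫ ω, (φ ω * (τ u ω).1 - g ω * φ ω) ∂m ≤ 0 := by
        rw [integral_sub hi1 hi2]; linarith
      calc ∫ ω, (φ ω) ^ 2 ∂m = ∫ ω, (φ ω * (τ u ω).1 - g ω * φ ω) ∂m := by
            refine integral_congr_ae (Filter.Eventually.of_forall fun ω => ?_)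
            have := max_mul_self ((τ u ω).1 - g ω)
            simp only [hφdef]; ring_nf; ring_nf at this; linarith
        _ ≤ 0 := this
    have hz : ∫ ω, (φ ω) ^ 2 ∂m = 0 :=
      le_antisymm h2 (integral_nonneg fun ω => sq_nonneg _)
    have := (integral_eq_zero_iff_of_nonneg (fun ω => sq_nonneg (φ ω))
      hφmem.integrable_sq).mp hz
    filter_upwards [this] with ω hω
    have : φ ω = 0 := by
      have := sq_eq_zero_iff.mp hω
      exact this
    have hle : (τ u ω).1 - g ω ≤ 0 := by
      by_contra hc
      push_neg at hc
      simp only [hφdef] at this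
      rw [max_eq_left hc.le] at this
      linarith
    linarith
  refine ⟨hK, ?_⟩
  -- basic integrabilities
  have hiltu1 : Integrable (fun ω => (l ω).1 * (τ u ω).1) m := integrable_mul_L2 hl1 (hτ1 u)
  have hiltu2 : Integrable (fun ω => (l ω).2 * (τ u ω).2) m := integrable_mul_L2 hl2 (hτ2 u)
  have higl1 : Integrable (fun ω => g ω * (l ω).1) m := integrable_mul_L2 hg hl1
  have hiFu : Integrable (fun ω => F ω * |(τ u ω).2|) m := integrable_mul_L2 hF (habs u)
  -- Step 2 : ∫ l₁ (τu)₁ = ∫ g l₁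
  have heqg : ∫ ω, (l ω).1 * (τ u ω).1 ∂m = ∫ ω, g ω * (l ω).1 ∂m := by
    have hup := hineq (fun ω => (2 * (l ω).1, (l ω).2))
      (memLp_prod_mk (hl1.const_mul 2) hl2)
      (by filter_upwards [hln] with ω h; positivity) hlt
    have hdn := hineq (fun ω => (0, (l ω).2))
      (memLp_prod_mk MemLp.zero hl2)
      (Filter.Eventually.of_forall fun ω => le_refl 0) hlt
    simp only [two_mul, add_sub_cancel_right, sub_self, zero_mul, add_zero] at hup
    simp only [zero_sub, sub_self, zero_mul, add_zero, neg_mul, mul_neg,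
      integral_neg, neg_le_neg_iff] at hdn
    linarith
  -- Step 3 : ∫ l₂ (τu)₂ = ∫ F |(τu)₂|
  have heqF : ∫ ω, (l ω).2 * (τ u ω).2 ∂m = ∫ ω, F ω * |(τ u ω).2| ∂m := by
    set s : Ω → ℝ := fun ω => F ω * (τ u ω).2 / |(τ u ω).2| with hsdef
    have hsabs : ∀ᵐ ω ∂m, |s ω| ≤ F ω := by
      filter_upwards [hFpos] with ω hω
      simp only [hsdef, abs_div, abs_mul, abs_abs]
      rcases eq_or_ne ((τ u ω).2) 0 with h | h
      · simp [h, hω.le]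
      · rw [mul_div_assoc, div_self (abs_ne_zero.mpr h), mul_one, abs_of_pos hω]
    have hsmem : MemLp s 2 m := by
      refine MemLp.of_le hF ?_ ?_
      · exact ((hF.1.aemeasurable.mul (hτ2 u).1.aemeasurable).div
          (hτ2 u).abs.1.aemeasurable).aestronglyMeasurable
      · filter_upwards [hsabs, hFpos] with ω h1 h2
        simpa [abs_of_pos h2] using h1
    have hkey : ∀ ω, s ω * (τ u ω).2 = F ω * |(τ u ω).2| := by
      intro ω
      rcases eq_or_ne ((τ u ω).2) 0 with h | h
      · simp [hsdef, h]
      · have habs0 : |(τ u ω).2| ≠ 0 := abs_ne_zero.mpr h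
        have h1 : s ω * (τ u ω).2
            = F ω * (|(τ u ω).2| * |(τ u ω).2|) / |(τ u ω).2| := by
          rw [hsdef]; rw [abs_mul_abs_self]; ring
        rw [h1, mul_div_assoc, mul_div_cancel_right₀ _ habs0]
    have hup : ∫ ω, F ω * |(τ u ω).2| ∂m ≤ ∫ ω, (l ω).2 * (τ u ω).2 ∂m := by
      have h := hineq (fun ω => ((l ω).1, s ω)) (memLp_prod_mk hl1 hsmem) hln hsabs
      simp only [sub_self, zero_mul, zero_add, mul_zero, integral_zero] at h
      have hsplit : ∫ ω, (s ω - (l ω).2) * (τ u ω).2 ∂m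
          = ∫ ω, F ω * |(τ u ω).2| ∂m - ∫ ω, (l ω).2 * (τ u ω).2 ∂m := by
        rw [← integral_sub hiFu hiltu2]
        refine integral_congr_ae (Filter.Eventually.of_forall fun ω => ?_)
        simp only [sub_mul, hkey]
      rw [hsplit] at h
      linarith
    have hdn : ∫ ω, (l ω).2 * (τ u ω).2 ∂m ≤ ∫ ω, F ω * |(τ u ω).2| ∂m := by
      refine integral_mono_ae hiltu2 hiFu ?_
      filter_upwards [hlt] with ω hω
      calc (l ω).2 * (τ u ω).2 ≤ |(l ω).2 * (τ u ω).2| := le_abs_self _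
        _ = |(l ω).2| * |(τ u ω).2| := abs_mul _ _
        _ ≤ F ω * |(τ u ω).2| := by
            exact mul_le_mul_of_nonneg_right hω (abs_nonneg _)
    linarith
  -- Step 4 : the variational inequality
  intro v hv
  have hiltv1 : Integrable (fun ω => (l ω).1 * (τ v ω).1) m := integrable_mul_L2 hl1 (hτ1 v)
  have hiltv2 : Integrable (fun ω => (l ω).2 * (τ v ω).2) m := integrable_mul_L2 hl2 (hτ2 v)
  have hilg : Integrable (fun ω => (l ω).1 * g ω) m := integrable_mul_L2 hl1 hg
  have hiFv : Integrable (fun ω => F ω * |(τ v ω).2|) m := integrable_mul_L2 hF (habs v)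
  -- split the mixed equation integrals
  have heqv := heq v
  have hequ := heq u
  rw [integral_add hiltv1 hiltv2] at heqv
  rw [integral_add hiltu1 hiltu2] at hequ
  -- bound ∫ l₁ (τv)₁ ≤ ∫ g l₁ = ∫ l₁ (τu)₁
  have hb1 : ∫ ω, (l ω).1 * (τ v ω).1 ∂m ≤ ∫ ω, g ω * (l ω).1 ∂m := by
    have : ∫ ω, (l ω).1 * (τ v ω).1 ∂m ≤ ∫ ω, (l ω).1 * g ω ∂m := by
      refine integral_mono_ae hiltv1 hilg ?_
      filter_upwards [hv, hln] with ω h1 h2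
      exact mul_le_mul_of_nonneg_left h1 h2
    have hc : ∫ ω, (l ω).1 * g ω ∂m = ∫ ω, g ω * (l ω).1 ∂m :=
      integral_congr_ae (Filter.Eventually.of_forall fun ω => mul_comm _ _)
    linarith
  -- bound ∫ l₂ (τv)₂ ≤ ∫ F |(τv)₂|
  have hb2 : ∫ ω, (l ω).2 * (τ v ω).2 ∂m ≤ ∫ ω, F ω * |(τ v ω).2| ∂m := by
    refine integral_mono_ae hiltv2 hiFv ?_
    filter_upwards [hlt] with ω hω
    calc (l ω).2 * (τ v ω).2 ≤ |(l ω).2 * (τ v ω).2| := le_abs_self _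
      _ = |(l ω).2| * |(τ v ω).2| := abs_mul _ _
      _ ≤ F ω * |(τ v ω).2| := mul_le_mul_of_nonneg_right hω (abs_nonneg _)
  -- put everything together
  have hasub : a u (v - u) = a u v - a u u := map_sub (a u) v u
  have hLsub : L (v - u) = L v - L u := map_sub L v u
  rw [hasub, hLsub]
  linarith
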